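/- Let a, b, η > 0 and let w_0 be a real number with 0 < w_0 ≤ sqrt(b/a). Define the sequence w_{t+1} = w_t + η·1{a w_t² < b} for t = 0, 1, 2, …. Then for every t ≥ 0, w_t = w_0 + η · min(t, ⌈(sqrt(b/a) − w_0)/η⌉). In particular, w_t grows linearly at rate η until it first reaches or exceeds sqrt(b/a) and is constant thereafter. -/

import Mathlib

/-- Per-component evolution of Spectral Gradient Descent for the bilinear
model (Proposition 2): for the recursion `w_{t+1} = w_t + η·1{a w_t² < b}` started at
`w_0 ∈ (0, sqrt(b/a)]`, one has `w_t = w_0 + η · min(t, ⌈(sqrt(b/a) − w_0)/η⌉)` for all `t`;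
in particular `w_t` grows linearly at rate `η` until it first reaches or exceeds `sqrt(b/a)`
and is constant thereafter. -/
theorem stmt10 (a b η w0 : ℝ) (ha : 0 < a) (hb : 0 < b) (hη : 0 < η)
    (hw0 : 0 < w0) (hw0' : w0 ≤ Real.sqrt (b / a))
    (w : ℕ → ℝ) (h0 : w 0 = w0)
    (hrec : ∀ t : ℕ, w (t + 1) = w t + η * (if a * w t ^ 2 < b then 1 else 0)) :
    ∀ t : ℕ,
      w t = w0 + η * min (t : ℝ) ((⌈(Real.sqrt (b / a) - w0) / η⌉ : ℤ) : ℝ) := by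
  set S := Real.sqrt (b / a) with hS
  set N : ℤ := ⌈(S - w0) / η⌉ with hNdef
  have hN0 : (0 : ℝ) ≤ (N : ℝ) := by
    have h1 : (0 : ℝ) ≤ (S - w0) / η := div_nonneg (by linarith) hη.le
    exact_mod_cast Int.ceil_nonneg h1
  intro t
  induction t with
  | zero =>
      rw [h0]
      norm_num
      right
      exact_mod_cast hN0
  | succ t ih =>
      rw [hrec t, ih]
      by_cases h : (t : ℝ) < (N : ℝ)
      · -- growing phase
        have htN : (t : ℤ) < N := by exact_mod_cast h
        have htN1 : (t : ℤ) ≤ N - 1 := by omega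
        have hceil : ((N : ℝ)) < (S - w0) / η + 1 := by
          exact_mod_cast Int.ceil_lt_add_one ((S - w0) / η)
        have ht' : (t : ℝ) < (S - w0) / η := by
          have : (t : ℝ) ≤ (N : ℝ) - 1 := by exact_mod_cast htN1
          linarith
        have hlt : w0 + η * (t : ℝ) < S := by
          have h2 : η * (t : ℝ) < S - w0 := by
            have := (lt_div_iff₀ hη).mp ht'
            linarith [mul_comm η (t : ℝ)]
          linarith
        have hwpos : (0 : ℝ) ≤ w0 + η * (t : ℝ) := by positivity
        have hcond : a * (w0 + η * min (t : ℝ) (N : ℝ)) ^ 2 < b := by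
          rw [min_eq_left h.le]
          have : (w0 + η * (t : ℝ)) ^ 2 < b / a := (Real.lt_sqrt hwpos).mp hlt
          calc a * (w0 + η * (t:ℝ))^2 < a * (b / a) := by
                exact (mul_lt_mul_iff_right₀ ha).mpr this
            _ = b := by field_simp
        rw [if_pos (by rwa [min_eq_left h.le] at hcond ⊢)]
        have hmin1 : min (t : ℝ) (N : ℝ) = (t : ℝ) := min_eq_left h.le
        have hmin2 : min ((t : ℝ) + 1) (N : ℝ) = (t : ℝ) + 1 := by
          have : (t : ℤ) + 1 ≤ N := by omega
          exact min_eq_left (by exact_mod_cast this)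
        push_cast
        rw [hmin1, hmin2]
        ring
      · -- saturated phase
        push_neg at h
        have hmin : min (t : ℝ) (N : ℝ) = (N : ℝ) := min_eq_right h
        have hge : S ≤ w0 + η * (N : ℝ) := by
          have := Int.le_ceil ((S - w0) / η)
          have h2 : (S - w0) / η ≤ (N : ℝ) := by exact_mod_cast this
          have := (div_le_iff₀ hη).mp h2
          linarith [mul_comm (N : ℝ) η]
        have hwpos : (0 : ℝ) ≤ w0 + η * (N : ℝ) := by
          have := mul_nonneg hη.le hN0
          linarith
        have hcond : ¬ a * (w0 + η * min (t : ℝ) (N : ℝ)) ^ 2 < b := by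
          rw [hmin]
          push_neg
          have hSq : S ^ 2 = b / a := Real.sq_sqrt (by positivity)
          have : b / a ≤ (w0 + η * (N : ℝ)) ^ 2 := by
            rw [← hSq]
            exact pow_le_pow_left₀ (Real.sqrt_nonneg _) hge 2
          calc b = a * (b / a) := by field_simp
            _ ≤ a * (w0 + η * (N : ℝ)) ^ 2 := (mul_le_mul_iff_right₀ ha).mpr this
        rw [if_neg hcond]
        have hmin2 : min ((t : ℝ) + 1) (N : ℝ) = (N : ℝ) := min_eq_right (by linarith)
        push_cast
        rw [hmin, hmin2]
        ring
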